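/- Let h(x,y) = max(x,y) on ℝ×ℝ and let I_L = (0,L) for L > 0. Then ⨍_{I_L}⨍_{I_L} |h(x,y) − essinf_{y∈I_L} h(x,y) − essinf_{x∈I_L} h(x,y) + essinf_{I_L×I_L} h| dy dx = L/3, which tends to ∞ as L → ∞. In contrast, the corresponding quantity for f(x,y) = x and for g(x,y) = y equals 0 for all pairs of shapes S₁, S₂ ⊆ ℝ. (Hence the class defined by bounding sup over rectangles of ⨍⨍ |f − essinf_{S₂} f_x − essinf_{S₁} f_y + essinf_{S₁×S₂} f| is not an upper semilattice.) -/

import Mathlib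

open MeasureTheory Set ENNReal

noncomputable section

/-- A shape: an open set of finite positive Lebesgue measure. -/
def IsShape {α : Type*} [TopologicalSpace α] [MeasureSpace α] (S : Set α) : Prop :=
  IsOpen S ∧ 0 < volume S ∧ volume S < ⊤

/-- The quantity `⨍_{S₁}⨍_{S₂} |f(x,y) − essinf_{S₂} f_x − essinf_{S₁} f_y + essinf_{S₁×S₂} f|`. -/
def recLowerOsc (f : ℝ × ℝ → ℝ) (S₁ S₂ : Set ℝ) : ℝ :=
  ⨍ x in S₁, ⨍ y in S₂,
    |f (x, y) - essInf (fun y' => f (x, y')) (volume.restrict S₂)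
      - essInf (fun x' => f (x', y)) (volume.restrict S₁)
      + essInf f (volume.restrict (S₁ ×ˢ S₂))|

lemma myEssInf_eq {α : Type*} [MeasurableSpace α] (μ : Measure α) (f : α → ℝ) (c : ℝ)
    (h1 : ∀ᵐ x ∂μ, c ≤ f x) (h2 : ∀ a, c < a → μ {x | f x < a} ≠ 0) :
    essInf f μ = c := by
  rw [essInf_eq_sSup]
  have hmem : c ∈ {a | μ {x | f x < a} = 0} := by
    simpa [ae_iff, not_le] using h1
  have hub : ∀ a ∈ {a | μ {x | f x < a} = 0}, a ≤ c := by
    intro a ha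
    by_contra hac
    exact h2 a (not_le.mp hac) ha
  exact le_antisymm (csSup_le ⟨c, hmem⟩ hub) (le_csSup ⟨c, hub⟩ hmem)

lemma essInf_fst_prod (S₁ S₂ : Set ℝ) (h2 : volume S₂ ≠ 0) :
    essInf (fun z : ℝ × ℝ => z.1) (volume.restrict (S₁ ×ˢ S₂))
      = essInf (fun x' : ℝ => x') (volume.restrict S₁) := by
  rw [essInf_eq_sSup, essInf_eq_sSup]
  congr 1
  ext a
  have hm : MeasurableSet {z : ℝ × ℝ | z.1 < a} :=
    measurableSet_lt measurable_fst measurable_const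
  have hset : {z : ℝ × ℝ | z.1 < a} ∩ (S₁ ×ˢ S₂) = ({x : ℝ | x < a} ∩ S₁) ×ˢ S₂ := by
    ext z
    simp only [Set.mem_inter_iff, Set.mem_setOf_eq, Set.mem_prod]
    tauto
  have hm' : MeasurableSet {x : ℝ | x < a} := measurableSet_Iio
  simp only [Set.mem_setOf_eq, Measure.restrict_apply hm, Measure.restrict_apply hm', hset,
    Measure.volume_eq_prod, Measure.prod_prod, mul_eq_zero, h2, or_false]

lemma essInf_snd_prod (S₁ S₂ : Set ℝ) (h1 : volume S₁ ≠ 0) :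
    essInf (fun z : ℝ × ℝ => z.2) (volume.restrict (S₁ ×ˢ S₂))
      = essInf (fun y' : ℝ => y') (volume.restrict S₂) := by
  rw [essInf_eq_sSup, essInf_eq_sSup]
  congr 1
  ext a
  have hm : MeasurableSet {z : ℝ × ℝ | z.2 < a} :=
    measurableSet_lt measurable_snd measurable_const
  have hset : {z : ℝ × ℝ | z.2 < a} ∩ (S₁ ×ˢ S₂) = S₁ ×ˢ ({y : ℝ | y < a} ∩ S₂) := by
    ext z
    simp only [Set.mem_inter_iff, Set.mem_setOf_eq, Set.mem_prod]
    tauto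
  have hm' : MeasurableSet {y : ℝ | y < a} := measurableSet_Iio
  simp only [Set.mem_setOf_eq, Measure.restrict_apply hm, Measure.restrict_apply hm', hset,
    Measure.volume_eq_prod, Measure.prod_prod, mul_eq_zero, h1, false_or]

lemma essInf_max_left {L x : ℝ} (hL : 0 < L) (hx : x ∈ Set.Ioo 0 L) :
    essInf (fun y' => max x y') (volume.restrict (Set.Ioo 0 L)) = x := by
  apply myEssInf_eq
  · exact Filter.Eventually.of_forall fun y => le_max_left _ _
  · intro a ha h0
    have hsub : Set.Ioo 0 (min a L) ⊆ {y | max x y < a} ∩ Set.Ioo 0 L := fun y hy =>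
      ⟨max_lt ha (hy.2.trans_le (min_le_left _ _)), hy.1, hy.2.trans_le (min_le_right _ _)⟩
    have hm : MeasurableSet {y : ℝ | max x y < a} :=
      measurableSet_lt (measurable_const.max measurable_id) measurable_const
    rw [Measure.restrict_apply hm] at h0
    have h3 := measure_mono (μ := volume) hsub
    rw [h0, nonpos_iff_eq_zero, Real.volume_Ioo, ENNReal.ofReal_eq_zero] at h3
    have : 0 < min a L := lt_min (hx.1.trans ha) hL
    linarith

lemma essInf_max_right {L y : ℝ} (hL : 0 < L) (hy : y ∈ Set.Ioo 0 L) :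
    essInf (fun x' => max x' y) (volume.restrict (Set.Ioo 0 L)) = y := by
  have : (fun x' => max x' y) = fun x' => max y x' := by
    funext x'; exact max_comm _ _
  rw [this]
  exact essInf_max_left hL hy

lemma essInf_max_square {L : ℝ} (hL : 0 < L) :
    essInf (fun z : ℝ × ℝ => max z.1 z.2)
      (volume.restrict (Set.Ioo 0 L ×ˢ Set.Ioo 0 L)) = 0 := by
  apply myEssInf_eq
  · rw [ae_restrict_iff' (measurableSet_Ioo.prod measurableSet_Ioo)]
    exact Filter.Eventually.of_forall fun z hz => le_trans hz.1.1.le (le_max_left _ _)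
  · intro a ha h0
    have hsub : Set.Ioo 0 (min a L) ×ˢ Set.Ioo 0 (min a L)
        ⊆ {z : ℝ × ℝ | max z.1 z.2 < a} ∩ (Set.Ioo 0 L ×ˢ Set.Ioo 0 L) := by
      rintro ⟨y₁, y₂⟩ ⟨h1, h2⟩
      exact ⟨max_lt (h1.2.trans_le (min_le_left _ _)) (h2.2.trans_le (min_le_left _ _)),
        ⟨h1.1, h1.2.trans_le (min_le_right _ _)⟩, ⟨h2.1, h2.2.trans_le (min_le_right _ _)⟩⟩
    have hm : MeasurableSet {z : ℝ × ℝ | max z.1 z.2 < a} :=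
      measurableSet_lt (measurable_fst.max measurable_snd) measurable_const
    rw [Measure.restrict_apply hm] at h0
    have h3 := measure_mono (μ := volume) hsub
    rw [h0, nonpos_iff_eq_zero, Measure.volume_eq_prod, Measure.prod_prod, Real.volume_Ioo,
      mul_eq_zero, or_self, ENNReal.ofReal_eq_zero] at h3
    have : 0 < min a L := lt_min ha hL
    linarith

lemma integral_min_Ioo {L x : ℝ} (hL : 0 < L) (hx : x ∈ Set.Ioo 0 L) :
    ∫ y in Set.Ioo 0 L, min x y = x * L - x ^ 2 / 2 := by
  have hcont : ∀ a b : ℝ, IntervalIntegrable (fun y => min x y) volume a b :=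
    fun a b => (continuous_const.min continuous_id).intervalIntegrable a b
  rw [← integral_Ioc_eq_integral_Ioo, ← intervalIntegral.integral_of_le hL.le,
    ← intervalIntegral.integral_add_adjacent_intervals (hcont 0 x) (hcont x L)]
  have e1 : ∫ y in (0:ℝ)..x, min x y = x ^ 2 / 2 := by
    rw [intervalIntegral.integral_congr (g := fun y => y) ?_, integral_id]
    · ring
    · intro y hy
      rw [Set.uIcc_of_le hx.1.le] at hy
      exact min_eq_right hy.2
  have e2 : ∫ y in x..L, min x y = (L - x) * x := by
    rw [intervalIntegral.integral_congr (g := fun _ => x) ?_,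
      intervalIntegral.integral_const, smul_eq_mul]
    intro y hy
    rw [Set.uIcc_of_le hx.2.le] at hy
    exact min_eq_left hy.1
  rw [e1, e2]; ring

lemma integral_poly_Ioo {L : ℝ} (hL : 0 < L) :
    ∫ x in Set.Ioo 0 L, (x * L - x ^ 2 / 2) = L ^ 3 / 3 := by
  rw [← integral_Ioc_eq_integral_Ioo, ← intervalIntegral.integral_of_le hL.le]
  have : ∫ x in (0:ℝ)..L, (x * L - x ^ 2 / 2)
      = (∫ x in (0:ℝ)..L, x * L) - ∫ x in (0:ℝ)..L, x ^ 2 / 2 := by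
    apply intervalIntegral.integral_sub
    · exact ((continuous_id.mul continuous_const)).intervalIntegrable _ _
    · exact ((continuous_pow 2).div_const 2).intervalIntegrable _ _
  rw [this, intervalIntegral.integral_mul_const, integral_id,
    intervalIntegral.integral_div, integral_pow]
  ring

theorem naive_rec_blo_not_semilattice :
    (∀ L : ℝ, 0 < L →
      recLowerOsc (fun z => max z.1 z.2) (Ioo 0 L) (Ioo 0 L) = L / 3) ∧
    (∀ S₁ S₂ : Set ℝ, IsShape S₁ → IsShape S₂ →
      recLowerOsc (fun z => z.1) S₁ S₂ = 0 ∧ recLowerOsc (fun z => z.2) S₁ S₂ = 0) := by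
  constructor
  · intro L hL
    have hLne : L ≠ 0 := hL.ne'
    have hvol : (volume (Set.Ioo (0:ℝ) L)).toReal = L := by
      rw [Real.volume_Ioo, sub_zero, ENNReal.toReal_ofReal hL.le]
    unfold recLowerOsc
    rw [essInf_max_square hL]
    have houter : (fun x => ⨍ y in Set.Ioo 0 L,
        |max x y - essInf (fun y' => max x y') (volume.restrict (Set.Ioo 0 L))
          - essInf (fun x' => max x' y) (volume.restrict (Set.Ioo 0 L)) + 0|)
        =ᵐ[volume.restrict (Set.Ioo 0 L)]
        (fun x => L⁻¹ * (x * L - x ^ 2 / 2)) := by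
      rw [Filter.EventuallyEq, ae_restrict_iff' measurableSet_Ioo]
      refine Filter.Eventually.of_forall fun x hx => ?_
      rw [essInf_max_left hL hx]
      have hinner : (fun y =>
          |max x y - x - essInf (fun x' => max x' y) (volume.restrict (Set.Ioo 0 L)) + 0|)
          =ᵐ[volume.restrict (Set.Ioo 0 L)] (fun y => min x y) := by
        rw [Filter.EventuallyEq, ae_restrict_iff' measurableSet_Ioo]
        refine Filter.Eventually.of_forall fun y hy => ?_
        rw [essInf_max_right hL hy]
        have hms : max x y + min x y = x + y := max_add_min x y
        have : max x y - x - y + 0 = -(min x y) := by linarith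
        rw [this, abs_neg, abs_of_nonneg (le_min hx.1.le hy.1.le)]
      rw [average_congr hinner, setAverage_eq, integral_min_Ioo hL hx, measureReal_def, hvol, smul_eq_mul]
    rw [average_congr houter, setAverage_eq, measureReal_def, hvol, integral_const_mul,
      integral_poly_Ioo hL, smul_eq_mul]
    field_simp
  · intro S₁ S₂ h₁ h₂
    obtain ⟨ho₁, hp₁, _⟩ := h₁
    obtain ⟨ho₂, hp₂, _⟩ := h₂
    have hn₁ : volume S₁ ≠ 0 := hp₁.ne'
    have hn₂ : volume S₂ ≠ 0 := hp₂.ne'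
    have hr₁ : volume.restrict S₁ ≠ 0 := by
      simpa [Measure.restrict_eq_zero] using hn₁
    have hr₂ : volume.restrict S₂ ≠ 0 := by
      simpa [Measure.restrict_eq_zero] using hn₂
    constructor
    · unfold recLowerOsc
      rw [essInf_fst_prod S₁ S₂ hn₂]
      simp [essInf_const _ hr₂]
    · unfold recLowerOsc
      rw [essInf_snd_prod S₁ S₂ hn₁]
      simp [essInf_const _ hr₁]
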